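/- arXiv:1003.3329 — 5 statements merged into one kernel-verified Lean document; each statement's English description precedes it below -/
import Mathlib

section
/- Let X be a 2k-independent subset of the set of 1-dimensional subspaces of V with |X| = n'. Then the map sending each k-element subset {i_1,...,i_k} of {1,...,n'} to P_{i_1} + ... + P_{i_k} is an isometric embedding of the Johnson graph J(n',k) into the Grassmann graph Γ_k(V). -/
open Module

/-- The Grassmann graph `Γ_k(V)`. -/
def GrassmannGraph (K V : Type*) [DivisionRing K] [AddCommGroup V] [Module K V] (k : ℕ) :
    SimpleGraph {S : Submodule K V // finrank K S = k} where
  Adj S U := S ≠ U ∧ finrank K ↥(S.1 ⊓ U.1) = k - 1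
  symm := by
    constructor
    rintro S U ⟨h1, h2⟩
    refine ⟨h1.symm, ?_⟩
    rwa [inf_comm]
  loopless := by constructor; rintro S ⟨h, -⟩; exact h rfl

/-- The Johnson graph `J(n,k)`. -/
def JohnsonGraph (n k : ℕ) : SimpleGraph {A : Finset (Fin n) // A.card = k} where
  Adj A B := A ≠ B ∧ (A.1 ∩ B.1).card = k - 1
  symm := by
    constructor
    rintro A B ⟨h1, h2⟩
    refine ⟨h1.symm, ?_⟩
    rwa [Finset.inter_comm]
  loopless := by constructor; rintro A ⟨h, -⟩; exact h rfl

private lemma walk_pot {α : Type*} {G : SimpleGraph α} (φ : α → ℕ)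
    (h : ∀ ⦃x y⦄, G.Adj x y → φ x ≤ φ y + 1) :
    ∀ {u v : α} (p : G.Walk u v), φ u ≤ φ v + p.length := by
  intro u v p
  induction p with
  | nil => simp
  | cons hadj q ih =>
    have := h hadj
    simp only [SimpleGraph.Walk.length_cons]
    omega

private lemma johnson_walk (n' k : ℕ) :
    ∀ (d : ℕ) (A B : {A : Finset (Fin n') // A.card = k}),
      (A.1 \ B.1).card = d → ∃ p : (JohnsonGraph n' k).Walk A B, p.length = d := by
  intro d
  induction d with
  | zero =>
    intro A B h
    have hsub : A.1 ⊆ B.1 := by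
      rwa [Finset.card_eq_zero, Finset.sdiff_eq_empty_iff_subset] at h
    have : A = B := Subtype.ext (Finset.eq_of_subset_of_card_le hsub (by rw [A.2, B.2]))
    subst this; exact ⟨.nil, rfl⟩
  | succ d ih =>
    intro A B h
    have hA := A.2
    have hB := B.2
    obtain ⟨a, ha⟩ : (A.1 \ B.1).Nonempty := by rw [← Finset.card_pos]; omega
    have hBA : 0 < (B.1 \ A.1).card := by
      have h1 := Finset.card_inter_add_card_sdiff A.1 B.1
      have h2 := Finset.card_inter_add_card_sdiff B.1 A.1
      rw [Finset.inter_comm] at h2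
      omega
    obtain ⟨b, hb⟩ : (B.1 \ A.1).Nonempty := by rwa [← Finset.card_pos]
    have haA : a ∈ A.1 := (Finset.mem_sdiff.1 ha).1
    have haB : a ∉ B.1 := (Finset.mem_sdiff.1 ha).2
    have hbB : b ∈ B.1 := (Finset.mem_sdiff.1 hb).1
    have hbA : b ∉ A.1 := (Finset.mem_sdiff.1 hb).2
    have hk1 : 1 ≤ k := by
      have := Finset.card_pos.2 ⟨a, haA⟩; omega
    have hcard' : (insert b (A.1.erase a)).card = k := by
      rw [Finset.card_insert_of_notMem (fun hmem => hbA (Finset.mem_of_mem_erase hmem)),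
        Finset.card_erase_of_mem haA, hA]
      omega
    set A' : {A : Finset (Fin n') // A.card = k} := ⟨insert b (A.1.erase a), hcard'⟩ with hA'
    have hAA' : A.1 ∩ A'.1 = A.1.erase a := by
      ext x
      simp only [hA', Finset.mem_inter, Finset.mem_insert, Finset.mem_erase]
      constructor
      · rintro ⟨hx, rfl | h'⟩
        · exact absurd hx hbA
        · exact h'
      · rintro ⟨h1, h2⟩; exact ⟨h2, Or.inr ⟨h1, h2⟩⟩
    have hadj : (JohnsonGraph n' k).Adj A A' := by
      constructor
      · intro hEq
        apply hbA
        rw [hEq]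
        exact Finset.mem_insert_self _ _
      · rw [hAA', Finset.card_erase_of_mem haA, hA]
    have hA'B : (A'.1 \ B.1).card = d := by
      have hset : A'.1 \ B.1 = (A.1 \ B.1).erase a := by
        ext x
        simp only [hA', Finset.mem_sdiff, Finset.mem_erase, Finset.mem_insert]
        constructor
        · rintro ⟨rfl | ⟨hxa, hxA⟩, hxB⟩
          · exact absurd hbB hxB
          · exact ⟨hxa, hxA, hxB⟩
        · rintro ⟨hxa, hxA, hxB⟩; exact ⟨Or.inr ⟨hxa, hxA⟩, hxB⟩
      rw [hset, Finset.card_erase_of_mem ha, h]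
      omega
    obtain ⟨p, hp⟩ := ih A' B hA'B
    exact ⟨.cons hadj p, by simp [hp]⟩

private lemma johnson_pot {n' k : ℕ} (B : Finset (Fin n'))
    {x y : {A : Finset (Fin n') // A.card = k}} (h : (JohnsonGraph n' k).Adj x y) :
    k - (x.1 ∩ B).card ≤ (k - (y.1 ∩ B).card) + 1 := by
  obtain ⟨-, hxy⟩ := h
  have hyx : (y.1 ∩ x.1).card = k - 1 := by rwa [Finset.inter_comm]
  have h1 := Finset.card_inter_add_card_sdiff (y.1 ∩ B) x.1
  have h2 : (y.1 ∩ B) \ x.1 ⊆ y.1 \ x.1 := by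
    intro t ht
    simp only [Finset.mem_sdiff, Finset.mem_inter] at *
    exact ⟨ht.1.1, ht.2⟩
  have h2' := Finset.card_le_card h2
  have h3 := Finset.card_inter_add_card_sdiff y.1 x.1
  have h4 : (y.1 ∩ B) ∩ x.1 ⊆ x.1 ∩ B := by
    intro t ht
    simp only [Finset.mem_inter] at *
    exact ⟨ht.2, ht.1.2⟩
  have h4' := Finset.card_le_card h4
  have h5 : (x.1 ∩ B).card ≤ k := by
    have := Finset.card_le_card (Finset.inter_subset_left : x.1 ∩ B ⊆ x.1)
    rw [x.2] at this; exact this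
  have hy := y.2
  omega

private lemma grassmann_pot {K V : Type*} [DivisionRing K] [AddCommGroup V] [Module K V]
    [FiniteDimensional K V] {k : ℕ} (T : Submodule K V)
    {x y : {S : Submodule K V // finrank K S = k}} (h : (GrassmannGraph K V k).Adj x y) :
    k - finrank K ↥(x.1 ⊓ T) ≤ (k - finrank K ↥(y.1 ⊓ T)) + 1 := by
  obtain ⟨-, hxy⟩ := h
  have hyx : finrank K ↥(y.1 ⊓ x.1) = k - 1 := by rwa [inf_comm]
  have heq := Submodule.finrank_sup_add_finrank_inf_eq (y.1 ⊓ T) (y.1 ⊓ x.1)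
  have hs : finrank K ↥((y.1 ⊓ T) ⊔ (y.1 ⊓ x.1)) ≤ k := by
    have hle : (y.1 ⊓ T) ⊔ (y.1 ⊓ x.1) ≤ y.1 := sup_le inf_le_left inf_le_left
    have := Submodule.finrank_mono hle
    rwa [y.2] at this
  have hi : finrank K ↥((y.1 ⊓ T) ⊓ (y.1 ⊓ x.1)) ≤ finrank K ↥(x.1 ⊓ T) := by
    refine Submodule.finrank_mono (le_inf ?_ ?_)
    · exact le_trans inf_le_right inf_le_right
    · exact le_trans inf_le_left inf_le_right
  have ha : finrank K ↥(y.1 ⊓ T) ≤ k := by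
    have := Submodule.finrank_mono (inf_le_left : y.1 ⊓ T ≤ y.1)
    rwa [y.2] at this
  have hxT : finrank K ↥(x.1 ⊓ T) ≤ k := by
    have := Submodule.finrank_mono (inf_le_left : x.1 ⊓ T ≤ x.1)
    rwa [x.2] at this
  omega

private lemma grassmann_walk_pot {K V : Type*} [DivisionRing K] [AddCommGroup V] [Module K V]
    [FiniteDimensional K V] {k : ℕ} (T : Submodule K V) :
    ∀ {u v : {S : Submodule K V // finrank K S = k}} (p : (GrassmannGraph K V k).Walk u v),
      k - finrank K ↥(u.1 ⊓ T) ≤ (k - finrank K ↥(v.1 ⊓ T)) + p.length := by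
  intro u v p
  induction p with
  | nil => simp
  | cons hadj q ih =>
    have := grassmann_pot T hadj
    simp only [SimpleGraph.Walk.length_cons]
    omega

set_option maxHeartbeats 1000000 in
theorem stmt4 (K V : Type*) [DivisionRing K] [AddCommGroup V] [Module K V]
    [FiniteDimensional K V] (n k n' : ℕ) (hn : finrank K V = n) (hk : 2 * k ≤ n)
    (P : Fin n' → Submodule K V) (hinj : Function.Injective P)
    (hone : ∀ i, finrank K ↥(P i) = 1)
    (hind : ∀ s : Finset (Fin n'), s.card ≤ 2 * k → finrank K ↥(s.sup P) = s.card)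
    (f : {A : Finset (Fin n') // A.card = k} → {S : Submodule K V // finrank K S = k})
    (hf : ∀ A, (f A).1 = A.1.sup P) :
    ∀ A B, (GrassmannGraph K V k).dist (f A) (f B) = (JohnsonGraph n' k).dist A B := by
  have fact2 : ∀ A B : Finset (Fin n'), (A ∪ B).card ≤ 2 * k →
      finrank K ↥(A.sup P ⊓ B.sup P) = (A ∩ B).card := by
    intro A B hU
    have hA := hind A (le_trans (Finset.card_le_card Finset.subset_union_left) hU)
    have hB := hind B (le_trans (Finset.card_le_card Finset.subset_union_right) hU)
    have hAB := hind (A ∪ B) hU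
    have heq := Submodule.finrank_sup_add_finrank_inf_eq (A.sup P) (B.sup P)
    rw [← Finset.sup_union] at heq
    have hc := Finset.card_inter_add_card_union A B
    omega
  have hadjmap : ∀ x y, (JohnsonGraph n' k).Adj x y →
      (GrassmannGraph K V k).Adj (f x) (f y) := by
    rintro x y ⟨hne, hint⟩
    have hk1 : 1 ≤ k := by
      rcases Nat.eq_zero_or_pos k with hk0 | h
      · exfalso
        apply hne
        apply Subtype.ext
        have hx : x.1 = ∅ := Finset.card_eq_zero.1 (by rw [x.2, hk0])
        have hy : y.1 = ∅ := Finset.card_eq_zero.1 (by rw [y.2, hk0])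
        rw [hx, hy]
      · exact h
    have hcu : (x.1 ∪ y.1).card ≤ 2 * k := by
      have := Finset.card_inter_add_card_union x.1 y.1
      have hx := x.2
      have hy := y.2
      omega
    have h2 := fact2 x.1 y.1 hcu
    rw [← hf x, ← hf y] at h2
    refine ⟨fun hEq => ?_, by rw [h2, hint]⟩
    rw [hEq] at h2
    rw [inf_idem] at h2
    rw [(f y).2, hint] at h2
    omega
  intro A B
  obtain ⟨p, hp⟩ := johnson_walk n' k ((A.1 \ B.1).card) A B rfl
  have hdk : (A.1 ∩ B.1).card + (A.1 \ B.1).card = k := by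
    have := Finset.card_inter_add_card_sdiff A.1 B.1
    rw [A.2] at this; exact this
  have hJle : (JohnsonGraph n' k).dist A B ≤ (A.1 \ B.1).card :=
    hp ▸ SimpleGraph.dist_le p
  have hJge : (A.1 \ B.1).card ≤ (JohnsonGraph n' k).dist A B := by
    obtain ⟨q, hq⟩ := (SimpleGraph.Reachable.exists_walk_length_eq_dist ⟨p⟩ :
      ∃ q : (JohnsonGraph n' k).Walk A B, q.length = (JohnsonGraph n' k).dist A B)
    have hpot := walk_pot (fun X => k - (X.1 ∩ B.1).card)
      (fun x y h => johnson_pot B.1 h) q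
    simp only [Finset.inter_self, B.2] at hpot
    omega
  have hmap : ∃ r : (GrassmannGraph K V k).Walk (f A) (f B), r.length = (A.1 \ B.1).card := by
    refine ⟨p.map (⟨f, fun h => hadjmap _ _ h⟩ : JohnsonGraph n' k →g GrassmannGraph K V k), ?_⟩
    rw [SimpleGraph.Walk.length_map, hp]
  obtain ⟨r, hr⟩ := hmap
  have hGle : (GrassmannGraph K V k).dist (f A) (f B) ≤ (A.1 \ B.1).card :=
    hr ▸ SimpleGraph.dist_le r
  have hGge : (A.1 \ B.1).card ≤ (GrassmannGraph K V k).dist (f A) (f B) := by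
    have hreach : (GrassmannGraph K V k).Reachable (f A) (f B) := ⟨r⟩
    obtain ⟨q, hq⟩ := hreach.exists_walk_length_eq_dist
    have hpot := grassmann_walk_pot (f B).1 q
    have hAB : finrank K ↥((f A).1 ⊓ (f B).1) = (A.1 ∩ B.1).card := by
      rw [hf A, hf B]
      refine fact2 _ _ ?_
      have := Finset.card_union_le A.1 B.1
      rw [A.2, B.2] at this
      omega
    have hBB : finrank K ↥((f B).1 ⊓ (f B).1) = k := by
      rw [inf_idem]; exact (f B).2
    simp only [hAB, hBB] at hpot
    omega
  rw [le_antisymm hJle hJge, le_antisymm hGle hGge]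
end

section
/- The annihilator map is distance-preserving: for any k-dimensional subspaces S, U of V, the distance between S⁰ and U⁰ in Γ_{n-k}(V*) equals the distance between S and U in Γ_k(V). -/
open Module

private lemma iso_dist_le {α β : Type*} {G : SimpleGraph α} {H : SimpleGraph β}
    (e : G ≃g H) (u v : α) : H.dist (e u) (e v) ≤ G.dist u v := by
  by_cases h : G.Reachable u v
  · obtain ⟨p, hp⟩ := h.exists_walk_length_eq_dist
    calc H.dist (e u) (e v) ≤ (p.map e.toHom).length := SimpleGraph.dist_le _
      _ = G.dist u v := by rw [SimpleGraph.Walk.length_map, hp]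
  · have h' : ¬ H.Reachable (e u) (e v) := fun ⟨q⟩ =>
      h ⟨(q.map e.symm.toHom).copy (by simp) (by simp)⟩
    rw [SimpleGraph.dist_eq_zero_of_not_reachable h,
      SimpleGraph.dist_eq_zero_of_not_reachable h']

private lemma iso_dist_eq {α β : Type*} {G : SimpleGraph α} {H : SimpleGraph β}
    (e : G ≃g H) (u v : α) : H.dist (e u) (e v) = G.dist u v := by
  refine le_antisymm (iso_dist_le e u v) ?_
  have := iso_dist_le e.symm (e u) (e v)
  simpa using this

private lemma finrank_dualAnn {K V : Type*} [Field K] [AddCommGroup V] [Module K V]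
    [FiniteDimensional K V] (W : Submodule K V) :
    finrank K W.dualAnnihilator = finrank K V - finrank K W := by
  have h1 : finrank K (V ⧸ W) = finrank K W.dualAnnihilator :=
    (Subspace.quotEquivAnnihilator W).finrank_eq
  have h2 := Submodule.finrank_quotient_add_finrank W
  omega

/-- The annihilator map as a graph isomorphism. -/
noncomputable def annGraphIso (K V : Type*) [Field K] [AddCommGroup V] [Module K V]
    [FiniteDimensional K V] (n k : ℕ) (hn : finrank K V = n) (hk1 : 1 ≤ k)
    (hkn : k + 1 ≤ n) :
    GrassmannGraph K V k ≃g GrassmannGraph K (Module.Dual K V) (n - k) where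
  toFun S := ⟨S.1.dualAnnihilator, by rw [finrank_dualAnn, hn, S.2]⟩
  invFun T := ⟨T.1.dualCoannihilator, by
    have := Subspace.finrank_add_finrank_dualCoannihilator_eq T.1
    rw [T.2, hn] at this; omega⟩
  left_inv S := Subtype.ext (Subspace.dualAnnihilator_dualCoannihilator_eq)
  right_inv T := Subtype.ext (Subspace.dualCoannihilator_dualAnnihilator_eq)
  map_rel_iff' := by
    rintro S U
    simp only [GrassmannGraph, Equiv.coe_fn_mk, ne_eq, Subtype.mk.injEq]
    have hann : S.1.dualAnnihilator ⊓ U.1.dualAnnihilator = (S.1 ⊔ U.1).dualAnnihilator :=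
      (Submodule.dualAnnihilator_sup_eq S.1 U.1).symm
    have h1 : finrank K ↥(S.1.dualAnnihilator ⊓ U.1.dualAnnihilator)
        = n - finrank K ↥(S.1 ⊔ U.1) := by
      rw [hann, finrank_dualAnn, hn]
    have h2 : finrank K ↥(S.1 ⊔ U.1) + finrank K ↥(S.1 ⊓ U.1) = k + k := by
      rw [Submodule.finrank_sup_add_finrank_inf_eq, S.2, U.2]
    have h3 : finrank K ↥(S.1 ⊔ U.1) ≤ n := hn ▸ Submodule.finrank_le _
    have hSU : S.1.dualAnnihilator = U.1.dualAnnihilator ↔ S.1 = U.1 :=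
      Subspace.dualAnnihilator_inj
    constructor
    · rintro ⟨hne, hd⟩
      refine ⟨fun h => hne (by rw [h]), ?_⟩
      rw [h1] at hd
      omega
    · rintro ⟨hne, hd⟩
      refine ⟨fun h => hne (Subtype.ext (hSU.mp h)), ?_⟩
      rw [h1]
      omega

theorem stmt9 (K V : Type*) [Field K] [AddCommGroup V] [Module K V]
    [FiniteDimensional K V] (n k : ℕ) (hn : finrank K V = n)
    (hk1 : 1 ≤ k) (hk2 : k ≤ n - 1)
    (S U : {S : Submodule K V // finrank K S = k})
    (S' U' : {T : Submodule K (Module.Dual K V) // finrank K T = n - k})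
    (hS' : S'.1 = S.1.dualAnnihilator) (hU' : U'.1 = U.1.dualAnnihilator) :
    (GrassmannGraph K (Module.Dual K V) (n - k)).dist S' U' =
      (GrassmannGraph K V k).dist S U := by
  have hkn : k + 1 ≤ n := by omega
  have hS : S' = annGraphIso K V n k hn hk1 hkn S := Subtype.ext hS'
  have hU : U' = annGraphIso K V n k hn hk1 hkn U := Subtype.ext hU'
  rw [hS, hU]
  exact iso_dist_eq (annGraphIso K V n k hn hk1 hkn) S U
end

section
/- The intersection of two distinct maximal cliques of the Grassmann graph Γ_k(V) (1 < k < n-1) is either empty, a single vertex, or a line [M,N]_k = {S : M ⊂ S ⊂ N} with dim M = k-1, dim N = k+1; in particular, the intersection of a star [M⟩_k and a top ⟨N]_k is nonempty with more than one element if and only if M ⊂ N, in which case it equals the line [M,N]_k. -/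
open Module

section Aux

variable {K V : Type*} [DivisionRing K] [AddCommGroup V] [Module K V]
  [FiniteDimensional K V] {k : ℕ}

lemma star_isClique (hk : 1 ≤ k) {M : Submodule K V} (hM : finrank K M = k - 1) :
    (GrassmannGraph K V k).IsClique {S : {S : Submodule K V // finrank K S = k} | M ≤ S.1} := by
  intro S hS U hU hSU
  refine ⟨hSU, ?_⟩
  have h1 : M ≤ S.1 ⊓ U.1 := le_inf hS hU
  have h2 : S.1 ⊓ U.1 < S.1 := by
    refine lt_of_le_of_ne inf_le_left fun h => hSU ?_
    have hle : S.1 ≤ U.1 := by rw [← h]; exact inf_le_right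
    exact Subtype.ext (Submodule.eq_of_le_of_finrank_eq hle (by rw [S.2, U.2]))
  have d1 : k - 1 ≤ finrank K ↥(S.1 ⊓ U.1) := hM ▸ Submodule.finrank_mono h1
  have d2 : finrank K ↥(S.1 ⊓ U.1) < k := by
    have := Submodule.finrank_lt_finrank_of_lt h2; rwa [S.2] at this
  omega

lemma top_isClique (hk : 1 ≤ k) {N : Submodule K V} (hN : finrank K N = k + 1) :
    (GrassmannGraph K V k).IsClique {S : {S : Submodule K V // finrank K S = k} | S.1 ≤ N} := by
  intro S hS U hU hSU
  refine ⟨hSU, ?_⟩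
  have hsum := Submodule.finrank_sup_add_finrank_inf_eq S.1 U.1
  have h2 : S.1 < S.1 ⊔ U.1 := by
    refine lt_of_le_of_ne le_sup_left fun h => hSU ?_
    have hle : U.1 ≤ S.1 := by rw [h]; exact le_sup_right
    exact Subtype.ext (Submodule.eq_of_le_of_finrank_eq hle (by rw [S.2, U.2])).symm
  have d2 : k < finrank K ↥(S.1 ⊔ U.1) := by
    have := Submodule.finrank_lt_finrank_of_lt h2; rwa [S.2] at this
  have d3 : finrank K ↥(S.1 ⊔ U.1) ≤ k + 1 := hN ▸ Submodule.finrank_mono (sup_le hS hU)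
  rw [S.2, U.2] at hsum
  omega

/-- Any clique containing an adjacent pair `S, U` lies in the star of `S ⊓ U`
or in the top of `S ⊔ U`. -/
lemma clique_subset_star_or_top (hk : 1 ≤ k)
    {E : Set {S : Submodule K V // finrank K S = k}}
    (hE : (GrassmannGraph K V k).IsClique E)
    {S U : {S : Submodule K V // finrank K S = k}} (hS : S ∈ E) (hU : U ∈ E)
    (hadj : (GrassmannGraph K V k).Adj S U) :
    (∀ T ∈ E, S.1 ⊓ U.1 ≤ T.1) ∨ (∀ T ∈ E, T.1 ≤ S.1 ⊔ U.1) := by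
  have hM : finrank K ↥(S.1 ⊓ U.1) = k - 1 := hadj.2
  have key : ∀ T ∈ E, S.1 ⊓ U.1 ≤ T.1 ∨ T.1 ≤ S.1 ⊔ U.1 := by
    intro T hT
    by_cases hTS : T = S
    · exact Or.inl (hTS ▸ inf_le_left)
    by_cases hTU : T = U
    · exact Or.inl (hTU ▸ inf_le_right)
    have haS : (GrassmannGraph K V k).Adj T S := hE hT hS hTS
    have haU : (GrassmannGraph K V k).Adj T U := hE hT hU hTU
    by_cases hc : T.1 ⊓ S.1 = T.1 ⊓ U.1
    · left
      have hle : T.1 ⊓ S.1 ≤ S.1 ⊓ U.1 := le_inf inf_le_right (hc ▸ inf_le_right)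
      have heq : T.1 ⊓ S.1 = S.1 ⊓ U.1 :=
        Submodule.eq_of_le_of_finrank_eq hle (by rw [haS.2, hM])
      rw [← heq]
      exact inf_le_left
    · right
      have hlt : T.1 ⊓ S.1 < T.1 ⊓ S.1 ⊔ T.1 ⊓ U.1 := by
        refine lt_of_le_of_ne le_sup_left fun h => hc ?_
        have hle : T.1 ⊓ U.1 ≤ T.1 ⊓ S.1 := by rw [h]; exact le_sup_right
        exact (Submodule.eq_of_le_of_finrank_eq hle (by rw [haU.2, haS.2])).symm
      have d1 : k - 1 < finrank K ↥(T.1 ⊓ S.1 ⊔ T.1 ⊓ U.1) :=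
        haS.2 ▸ Submodule.finrank_lt_finrank_of_lt hlt
      have hsub : T.1 ⊓ S.1 ⊔ T.1 ⊓ U.1 ≤ T.1 := sup_le inf_le_left inf_le_left
      have heq : T.1 ⊓ S.1 ⊔ T.1 ⊓ U.1 = T.1 :=
        Submodule.eq_of_le_of_finrank_le hsub (by rw [T.2]; omega)
      rw [← heq]
      exact sup_le (le_trans inf_le_right le_sup_left) (le_trans inf_le_right le_sup_right)
  by_contra hcon
  push_neg at hcon
  obtain ⟨⟨T₂, hT₂E, hT₂⟩, T₁, hT₁E, hT₁⟩ := hcon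
  have hT₁M : S.1 ⊓ U.1 ≤ T₁.1 := (key T₁ hT₁E).resolve_right hT₁
  have hT₂N : T₂.1 ≤ S.1 ⊔ U.1 := (key T₂ hT₂E).resolve_left hT₂
  have hne : T₁ ≠ T₂ := fun h => hT₂ (h ▸ hT₁M)
  have hadj12 : (GrassmannGraph K V k).Adj T₁ T₂ := hE hT₁E hT₂E hne
  have h1 : T₁.1 ⊓ T₂.1 ≤ T₁.1 ⊓ (S.1 ⊔ U.1) := le_inf inf_le_left (le_trans inf_le_right hT₂N)
  have h2 : T₁.1 ⊓ (S.1 ⊔ U.1) < T₁.1 :=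
    lt_of_le_of_ne inf_le_left fun h => hT₁ (inf_eq_left.mp h)
  have d1 : finrank K ↥(T₁.1 ⊓ (S.1 ⊔ U.1)) < k := by
    have := Submodule.finrank_lt_finrank_of_lt h2; rwa [T₁.2] at this
  have d2 : k - 1 ≤ finrank K ↥(T₁.1 ⊓ (S.1 ⊔ U.1)) := hadj12.2 ▸ Submodule.finrank_mono h1
  have heq : T₁.1 ⊓ T₂.1 = T₁.1 ⊓ (S.1 ⊔ U.1) :=
    Submodule.eq_of_le_of_finrank_eq h1 (by rw [hadj12.2]; omega)
  have hMle : S.1 ⊓ U.1 ≤ T₁.1 ⊓ (S.1 ⊔ U.1) :=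
    le_inf hT₁M (le_trans inf_le_left le_sup_left)
  rw [← heq] at hMle
  exact hT₂ (le_trans hMle inf_le_right)

/-- A `k`-dimensional subspace between `M` and `N` obtained by adjoining `w ∈ N \ M`. -/
lemma finrank_sup_span (hk : 1 ≤ k) {M : Submodule K V} (hM : finrank K M = k - 1)
    {w : V} (hwM : w ∉ M) : finrank K ↥(M ⊔ K ∙ w) = k := by
  have hw0 : w ≠ 0 := fun h => hwM (h ▸ M.zero_mem)
  have hdisj : M ⊓ (K ∙ w) = ⊥ :=
    disjoint_iff.mp ((Submodule.disjoint_span_singleton' hw0).mpr hwM)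
  have hsum := Submodule.finrank_sup_add_finrank_inf_eq M (K ∙ w)
  rw [hdisj, finrank_bot, finrank_span_singleton hw0, hM] at hsum
  omega

lemma line_nontrivial (hk : 1 ≤ k) {M N : Submodule K V} (hM : finrank K M = k - 1)
    (hN : finrank K N = k + 1) (hMN : M ≤ N) :
    ({S : {S : Submodule K V // finrank K S = k} | M ≤ S.1} ∩ {S | S.1 ≤ N}).Nontrivial := by
  have hMltN : M < N := lt_of_le_of_ne hMN (fun h => by rw [h, hN] at hM; omega)
  obtain ⟨w, hwN, hwM⟩ := SetLike.exists_of_lt hMltN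
  set S₂ : Submodule K V := M ⊔ K ∙ w with hS₂def
  have hS₂ : finrank K ↥S₂ = k := finrank_sup_span hk hM hwM
  have hS₂N : S₂ ≤ N := sup_le hMN ((Submodule.span_singleton_le_iff_mem w N).mpr hwN)
  have hS₂lt : S₂ < N := lt_of_le_of_ne hS₂N (fun h => by rw [h, hN] at hS₂; omega)
  obtain ⟨v, hvN, hvS₂⟩ := SetLike.exists_of_lt hS₂lt
  have hvM : v ∉ M := fun h => hvS₂ (le_sup_left (α := Submodule K V) h)
  set S₁ : Submodule K V := M ⊔ K ∙ v with hS₁def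
  have hS₁ : finrank K ↥S₁ = k := finrank_sup_span hk hM hvM
  have hS₁N : S₁ ≤ N := sup_le hMN ((Submodule.span_singleton_le_iff_mem v N).mpr hvN)
  refine ⟨⟨S₁, hS₁⟩, ⟨(le_sup_left : M ≤ S₁), hS₁N⟩, ⟨S₂, hS₂⟩,
    ⟨(le_sup_left : M ≤ S₂), hS₂N⟩, fun h => ?_⟩
  apply hvS₂
  have hvS₁ : v ∈ S₁ := le_sup_right (α := Submodule K V) (Submodule.mem_span_singleton_self v)
  have : S₁ = S₂ := congrArg Subtype.val h
  exact this ▸ hvS₁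

end Aux

theorem stmt11 (K V : Type*) [DivisionRing K] [AddCommGroup V] [Module K V]
    [FiniteDimensional K V] (n k : ℕ) (hn : finrank K V = n)
    (hk1 : 1 < k) (hk2 : k < n - 1) :
    (∀ C D : Set {S : Submodule K V // finrank K S = k},
      (GrassmannGraph K V k).IsClique C →
      (∀ E, (GrassmannGraph K V k).IsClique E → C ⊆ E → C = E) →
      (GrassmannGraph K V k).IsClique D →
      (∀ E, (GrassmannGraph K V k).IsClique E → D ⊆ E → D = E) →
      C ≠ D →
      C ∩ D = ∅ ∨ (∃ S, C ∩ D = {S}) ∨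
        (∃ M N : Submodule K V, finrank K ↥M = k - 1 ∧ finrank K ↥N = k + 1 ∧ M ≤ N ∧
          C ∩ D = {S | M ≤ S.1 ∧ S.1 ≤ N})) ∧
    (∀ M N : Submodule K V, finrank K ↥M = k - 1 → finrank K ↥N = k + 1 →
      (({S : {S : Submodule K V // finrank K S = k} | M ≤ S.1} ∩
        {S | S.1 ≤ N}).Nontrivial ↔ M ≤ N) ∧
      (M ≤ N →
        {S : {S : Submodule K V // finrank K S = k} | M ≤ S.1} ∩ {S | S.1 ≤ N} =
          {S | M ≤ S.1 ∧ S.1 ≤ N})) := by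
  have hk : 1 ≤ k := hk1.le
  constructor
  · intro C D hC hCmax hD hDmax hCD
    rcases Set.eq_empty_or_nonempty (C ∩ D) with he | ⟨S₀, hS₀⟩
    · exact Or.inl he
    right
    by_cases hnt : (C ∩ D).Nontrivial
    · right
      obtain ⟨S, hSCD, U, hUCD, hSU⟩ := hnt
      have hadj : (GrassmannGraph K V k).Adj S U := hC hSCD.1 hUCD.1 hSU
      have hM : finrank K ↥(S.1 ⊓ U.1) = k - 1 := hadj.2
      have hN : finrank K ↥(S.1 ⊔ U.1) = k + 1 := by
        have hsum := Submodule.finrank_sup_add_finrank_inf_eq S.1 U.1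
        rw [S.2, U.2, hM] at hsum
        omega
      have hCeq : C = {T : {S : Submodule K V // finrank K S = k} | S.1 ⊓ U.1 ≤ T.1} ∨
          C = {T | T.1 ≤ S.1 ⊔ U.1} := by
        rcases clique_subset_star_or_top hk hC hSCD.1 hUCD.1 hadj with h | h
        · exact Or.inl (hCmax _ (star_isClique hk hM) h)
        · exact Or.inr (hCmax _ (top_isClique hk hN) h)
      have hDeq : D = {T : {S : Submodule K V // finrank K S = k} | S.1 ⊓ U.1 ≤ T.1} ∨
          D = {T | T.1 ≤ S.1 ⊔ U.1} := by
        rcases clique_subset_star_or_top hk hD hSCD.2 hUCD.2 hadj with h | h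
        · exact Or.inl (hDmax _ (star_isClique hk hM) h)
        · exact Or.inr (hDmax _ (top_isClique hk hN) h)
      refine ⟨S.1 ⊓ U.1, S.1 ⊔ U.1, hM, hN, le_trans inf_le_left le_sup_left, ?_⟩
      rcases hCeq with hCe | hCe <;> rcases hDeq with hDe | hDe
      · exact absurd (hCe.trans hDe.symm) hCD
      · rw [hCe, hDe]; rfl
      · rw [hCe, hDe, Set.inter_comm]; rfl
      · exact absurd (hCe.trans hDe.symm) hCD
    · left
      refine ⟨S₀, Set.eq_singleton_iff_unique_mem.mpr ⟨hS₀, fun x hx => ?_⟩⟩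
      by_contra hx'
      exact hnt ⟨x, hx, S₀, hS₀, hx'⟩
  · intro M N hM hN
    refine ⟨⟨?_, line_nontrivial hk hM hN⟩, fun _ => rfl⟩
    rintro ⟨S, ⟨hMS, hSN⟩, -⟩
    exact hMS.trans hSN
end

section
/- Let B be a base of V and A_k the associated apartment of the Grassmannian G_k(V) (all k-dimensional subspaces spanned by subsets of B). Then the restriction of the Grassmann graph Γ_k(V) to A_k is isomorphic to the Johnson graph J(n,k), and the inclusion A_k → G_k(V) is an isometric embedding of J(n,k) in Γ_k(V). -/
open Module

section Aux

variable {K V : Type*} [DivisionRing K] [AddCommGroup V] [Module K V]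

/-- Auxiliary: finrank of the span of the image of a finset of basis vectors. -/
lemma aux_finrank_span {n : ℕ} (b : Basis (Fin n) K V) (A : Finset (Fin n)) :
    finrank K ↥(Submodule.span K (b '' ↑A)) = A.card := by
  have h : (b '' ↑A) = Set.range (⇑b ∘ (Subtype.val : A → Fin n)) := by
    ext x
    simp [Set.mem_image]
  rw [h, finrank_span_eq_card (b.linearIndependent.comp _ Subtype.val_injective)]
  simp

/-- Auxiliary: span of images of basis vectors intersects nicely. -/
lemma aux_inf_span {n : ℕ} (b : Basis (Fin n) K V) (A B : Finset (Fin n)) :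
    Submodule.span K (b '' ↑A) ⊓ Submodule.span K (b '' ↑B) =
      Submodule.span K (b '' ↑(A ∩ B)) := by
  apply le_antisymm
  · intro x hx
    rw [Submodule.mem_inf] at hx
    obtain ⟨hA, hB⟩ := hx
    rw [Basis.mem_span_image] at hA hB ⊢
    rw [Finset.coe_inter]
    exact Set.subset_inter hA hB
  · exact le_inf
      (Submodule.span_mono (Set.image_mono (by simp [Finset.coe_inter])))
      (Submodule.span_mono (Set.image_mono (by simp [Finset.coe_inter])))

/-- Johnson graph: a walk of length `(A \ B).card` between any `A` and `B`. -/
lemma aux_johnson_walk {n k : ℕ} (m : ℕ) :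
    ∀ (A B : {A : Finset (Fin n) // A.card = k}), (A.1 \ B.1).card = m →
      ∃ w : (JohnsonGraph n k).Walk A B, w.length = m := by
  induction m with
  | zero =>
    intro A B h
    have hsub : A.1 ⊆ B.1 := by
      rw [Finset.card_eq_zero, Finset.sdiff_eq_empty_iff_subset] at h
      exact h
    have : A = B := Subtype.ext (Finset.eq_of_subset_of_card_le hsub (by rw [A.2, B.2]))
    subst this
    exact ⟨SimpleGraph.Walk.nil, rfl⟩
  | succ m ih =>
    intro A B h
    have hA : (A.1 \ B.1).Nonempty := by rw [← Finset.card_pos, h]; omega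
    obtain ⟨a, ha⟩ := hA
    have haA : a ∈ A.1 := (Finset.mem_sdiff.1 ha).1
    have haB : a ∉ B.1 := (Finset.mem_sdiff.1 ha).2
    have hBA : (B.1 \ A.1).Nonempty := by
      rw [← Finset.card_pos]
      have h1 := Finset.card_sdiff_add_card_inter A.1 B.1
      have h2 := Finset.card_sdiff_add_card_inter B.1 A.1
      rw [Finset.inter_comm] at h2
      rw [A.2] at h1
      rw [B.2] at h2
      omega
    obtain ⟨c, hc⟩ := hBA
    have hcB : c ∈ B.1 := (Finset.mem_sdiff.1 hc).1
    have hcA : c ∉ A.1 := (Finset.mem_sdiff.1 hc).2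
    have hk : 1 ≤ k := by rw [← A.2]; exact Finset.card_pos.2 ⟨a, haA⟩
    have hcae : c ∉ A.1.erase a := fun hmem => hcA (Finset.mem_of_mem_erase hmem)
    have hcard : (insert c (A.1.erase a)).card = k := by
      rw [Finset.card_insert_of_notMem hcae, Finset.card_erase_of_mem haA, A.2]
      omega
    set A' : {A : Finset (Fin n) // A.card = k} := ⟨insert c (A.1.erase a), hcard⟩ with hA'
    have hinter : A.1 ∩ A'.1 = A.1.erase a := by
      rw [hA']
      rw [Finset.inter_comm, Finset.insert_inter_of_notMem hcA,
        Finset.inter_eq_left.2 (Finset.erase_subset _ _)]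
    have hadj : (JohnsonGraph n k).Adj A A' := by
      refine ⟨fun heq => hcA ?_, ?_⟩
      · rw [heq]; exact Finset.mem_insert_self _ _
      · rw [hinter, Finset.card_erase_of_mem haA, A.2]
    have hsd : (A'.1 \ B.1).card = m := by
      have : A'.1 \ B.1 = (A.1 \ B.1).erase a := by
        rw [hA']
        simp only
        rw [Finset.insert_sdiff_of_mem _ hcB, Finset.erase_sdiff_comm]
      rw [this, Finset.card_erase_of_mem ha, h]
      omega
    obtain ⟨w, hw⟩ := ih A' B hsd
    exact ⟨SimpleGraph.Walk.cons hadj w, by simp [hw]⟩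

/-- Grassmann graph: lower bound on walk lengths. -/
lemma aux_grassmann_lb [FiniteDimensional K V] {k : ℕ} (hk : 1 ≤ k)
    {S U : {S : Submodule K V // finrank K S = k}} (w : (GrassmannGraph K V k).Walk S U) :
    k - finrank K ↥(S.1 ⊓ U.1) ≤ w.length := by
  induction w with
  | @nil S =>
    simp only [SimpleGraph.Walk.length_nil]
    rw [inf_idem, S.2]
    omega
  | @cons S S' U h p ih =>
    simp only [SimpleGraph.Walk.length_cons]
    obtain ⟨-, hdim⟩ : S ≠ S' ∧ finrank K ↥(S.1 ⊓ S'.1) = k - 1 := h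
    -- show finrank (S' ⊓ U) ≤ finrank (S ⊓ U) + 1
    set W : Submodule K V := S'.1 ⊓ U.1
    set X : Submodule K V := S.1 ⊓ S'.1
    have hsum := Submodule.finrank_sup_add_finrank_inf_eq W X
    have h1 : finrank K ↥(W ⊔ X) ≤ k := by
      rw [← S'.2]
      exact Submodule.finrank_mono (sup_le (inf_le_left) (inf_le_right))
    have h2 : finrank K ↥(W ⊓ X) ≤ finrank K ↥(S.1 ⊓ U.1) := by
      refine Submodule.finrank_mono ?_
      exact le_inf (le_trans inf_le_right inf_le_left) (le_trans inf_le_left inf_le_right)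
    rw [hdim] at hsum
    have hW : finrank K ↥(S'.1 ⊓ U.1) ≤ finrank K ↥(S.1 ⊓ U.1) + 1 := by
      change finrank K ↥W ≤ _
      omega
    omega

end Aux

theorem stmt13 (K V : Type*) [DivisionRing K] [AddCommGroup V] [Module K V]
    [FiniteDimensional K V] (n k : ℕ) (hn : finrank K V = n)
    (hk1 : 1 ≤ k) (hk2 : k ≤ n - 1) (b : Basis (Fin n) K V)
    (g : {A : Finset (Fin n) // A.card = k} → {S : Submodule K V // finrank K S = k})
    (hg : ∀ A, (g A).1 = Submodule.span K (b '' ↑A.1)) :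
    Function.Injective g ∧
    (∀ A B, (GrassmannGraph K V k).Adj (g A) (g B) ↔ (JohnsonGraph n k).Adj A B) ∧
    (∀ A B, (GrassmannGraph K V k).dist (g A) (g B) = (JohnsonGraph n k).dist A B) := by
  classical
  have hdim : ∀ A B, finrank K ↥((g A).1 ⊓ (g B).1) = (A.1 ∩ B.1).card := by
    intro A B
    rw [hg, hg, aux_inf_span, aux_finrank_span]
  have hinj : Function.Injective g := by
    intro A B h
    have hAB : (g A).1 = (g B).1 := by rw [h]
    rw [hg, hg] at hAB
    refine Subtype.ext (Finset.ext fun i => ?_)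
    rw [← Finset.mem_coe, ← b.self_mem_span_image, hAB, b.self_mem_span_image, Finset.mem_coe]
  have hadj : ∀ A B, (GrassmannGraph K V k).Adj (g A) (g B) ↔ (JohnsonGraph n k).Adj A B := by
    intro A B
    constructor
    · rintro ⟨h1, h2⟩
      refine ⟨fun heq => h1 (by rw [heq]), ?_⟩
      rw [← hdim A B]
      exact h2
    · rintro ⟨h1, h2⟩
      exact ⟨fun heq => h1 (hinj heq), by rw [hdim A B]; exact h2⟩
  refine ⟨hinj, hadj, ?_⟩
  intro A B
  -- the homomorphism from Johnson to Grassmann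
  let f : JohnsonGraph n k →g GrassmannGraph K V k :=
    ⟨g, fun {A B} h => (hadj A B).2 h⟩
  -- cardinalities
  have hcard := Finset.card_sdiff_add_card_inter A.1 B.1
  rw [A.2] at hcard
  set m := (A.1 \ B.1).card with hm
  -- Johnson walk of length m
  obtain ⟨wJ, hwJ⟩ := aux_johnson_walk m A B rfl
  have hreachJ : (JohnsonGraph n k).Reachable A B := ⟨wJ⟩
  have hdJ : (JohnsonGraph n k).dist A B ≤ m := hwJ ▸ SimpleGraph.dist_le wJ
  -- Grassmann dist ≤ Johnson dist
  obtain ⟨wJ', hwJ'⟩ := hreachJ.exists_walk_length_eq_dist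
  have hdG_le : (GrassmannGraph K V k).dist (g A) (g B) ≤ (JohnsonGraph n k).dist A B := by
    have := SimpleGraph.dist_le (wJ'.map f)
    rwa [SimpleGraph.Walk.length_map, hwJ'] at this
  -- Grassmann dist ≥ m
  have hreachG : (GrassmannGraph K V k).Reachable (g A) (g B) := ⟨wJ.map f⟩
  obtain ⟨wG, hwG⟩ := hreachG.exists_walk_length_eq_dist
  have hlb := aux_grassmann_lb hk1 wG
  rw [hwG, hdim A B] at hlb
  have hinter_le : (A.1 ∩ B.1).card ≤ k := by omega
  omega
end

section
/- Let P_1,...,P_{m+1} be 1-dimensional subspaces of a vector space V over a division ring forming an m-simplex (any m of them independent, but the whole set dependent). Then every permutation of {P_1,...,P_{m+1}} extends to a linear automorphism of V permuting these subspaces accordingly. -/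
open Module Submodule

private lemma sup_span_eq' {K V : Type*} [DivisionRing K] [AddCommGroup V] [Module K V]
    {n : ℕ} (v : Fin n → V) (s : Finset (Fin n)) :
    s.sup (fun i => span K {v i}) = span K (v '' ↑s) := by
  apply le_antisymm
  · exact Finset.sup_le fun i hi => span_mono (Set.singleton_subset_iff.2 ⟨i, hi, rfl⟩)
  · rw [span_le]
    rintro _ ⟨i, hi, rfl⟩
    exact (Finset.le_sup (f := fun i => span K {v i}) hi) (mem_span_singleton_self (v i))

private lemma normalize' {K V : Type*} [DivisionRing K] [AddCommGroup V] [Module K V]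
    {m : ℕ} (hm : 1 ≤ m) (P : Fin (m + 1) → Submodule K V)
    (hone : ∀ i, finrank K ↥(P i) = 1)
    (hind : ∀ s : Finset (Fin (m + 1)), s.card ≤ m → finrank K ↥(s.sup P) = s.card)
    (hdep : finrank K ↥(Finset.univ.sup P) = m) :
    ∃ x : Fin (m + 1) → V, (∀ i, P i = span K {x i}) ∧
      LinearIndependent K (fun i : Fin m => x i.castSucc) ∧
      x (Fin.last m) = ∑ i : Fin m, x i.castSucc ∧
      span K (Set.range fun i : Fin m => x i.castSucc) = Finset.univ.sup P := by
  classical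
  -- choose generators
  have hgen : ∀ i, ∃ v : V, P i = span K {v} := by
    intro i
    obtain ⟨w, hw0, hw⟩ := finrank_eq_one_iff'.mp (hone i)
    refine ⟨(w : V), le_antisymm ?_ ?_⟩
    · intro z hz
      obtain ⟨a, ha⟩ := hw ⟨z, hz⟩
      exact Submodule.mem_span_singleton.2 ⟨a, show a • (w : V) = z from congrArg Subtype.val ha⟩
    · rw [span_le, Set.singleton_subset_iff]; exact w.2
  choose v hv using hgen
  have hsup : ∀ s : Finset (Fin (m + 1)), s.sup P = span K (v '' ↑s) := by
    intro s
    rw [← sup_span_eq']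
    exact Finset.sup_congr rfl fun i _ => hv i
  set X : Fin m → V := fun i => v i.castSucc with hX
  set s0 : Finset (Fin (m + 1)) := Finset.univ.image Fin.castSucc with hs0
  have hs0card : s0.card = m := by
    rw [hs0, Finset.card_image_of_injective _ (Fin.castSucc_injective m),
      Finset.card_univ, Fintype.card_fin]
  have hrangeX : Set.range X = v '' ↑s0 := by
    ext w
    simp only [hX, hs0, Set.mem_range, Finset.coe_image, Finset.coe_univ, Set.image_univ,
      Set.mem_image]
    constructor
    · rintro ⟨i, rfl⟩; exact ⟨i.castSucc, ⟨i, rfl⟩, rfl⟩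
    · rintro ⟨j, ⟨i, rfl⟩, rfl⟩; exact ⟨i, rfl⟩
  have hspanX : span K (Set.range X) = s0.sup P := by rw [hsup, hrangeX]
  have hfrX : finrank K ↥(span K (Set.range X)) = m := by
    rw [hspanX, hind s0 (le_of_eq hs0card), hs0card]
  have hliX : LinearIndependent K X := by
    rw [linearIndependent_iff_card_eq_finrank_span]
    simp only [Set.finrank]
    rw [hfrX, Fintype.card_fin]
  -- total span equals span of the first m
  haveI : FiniteDimensional K ↥(Finset.univ.sup P) := by
    rw [hsup]
    exact FiniteDimensional.span_of_finite K (Finset.finite_toSet _ |>.image v)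
  have htot : span K (Set.range X) = Finset.univ.sup P := by
    apply Submodule.eq_of_le_of_finrank_le
    · rw [hspanX]
      exact Finset.sup_mono (Finset.subset_univ s0)
    · rw [hfrX, hdep]
  have hmemlast : v (Fin.last m) ∈ span K (Set.range X) := by
    rw [htot]
    exact Finset.le_sup (f := P) (Finset.mem_univ _) ((hv _).symm ▸ mem_span_singleton_self _)
  obtain ⟨c, hc⟩ := (mem_span_range_iff_exists_fun K).1 hmemlast
  -- all coefficients nonzero
  have hcne : ∀ j, c j ≠ 0 := by
    intro j hcj
    set t : Finset (Fin (m + 1)) := (Finset.univ.erase j).image Fin.castSucc with ht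
    have htcard : t.card = m - 1 := by
      rw [ht, Finset.card_image_of_injective _ (Fin.castSucc_injective m),
        Finset.card_erase_of_mem (Finset.mem_univ _), Finset.card_univ, Fintype.card_fin]
    have hvlast_mem : v (Fin.last m) ∈ t.sup P := by
      rw [hsup, ← hc,
        show (∑ i : Fin m, c i • X i) = ∑ i ∈ Finset.univ.erase j, c i • X i from
          (Finset.sum_erase _ (by rw [hcj, zero_smul])).symm]
      apply Submodule.sum_mem
      intro i hi
      apply Submodule.smul_mem
      apply subset_span
      exact ⟨i.castSucc, by
        simp only [ht, Finset.coe_image, Set.mem_image, Finset.coe_erase]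
        exact ⟨i, by simpa using (Finset.mem_erase.1 hi).1, rfl⟩, rfl⟩
    set s1 : Finset (Fin (m + 1)) := insert (Fin.last m) t with hs1
    have hlast_not : Fin.last m ∉ t := by
      simp only [ht, Finset.mem_image]
      rintro ⟨i, -, hi⟩
      exact absurd hi (Fin.castSucc_lt_last i).ne
    have hs1card : s1.card = m := by
      rw [hs1, Finset.card_insert_of_notMem hlast_not, htcard]
      omega
    have hsupeq : s1.sup P = t.sup P := by
      rw [hs1, Finset.sup_insert, sup_eq_right]
      rw [hv (Fin.last m), span_le, Set.singleton_subset_iff]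
      exact hvlast_mem
    have h1 := hind s1 (le_of_eq hs1card)
    have h2 := hind t (by omega)
    rw [hsupeq, h2, htcard, hs1card] at h1
    omega
  -- rescale
  set x : Fin (m + 1) → V :=
    Fin.lastCases (v (Fin.last m)) (fun i => c i • v i.castSucc) with hxdef
  have hxc : ∀ i : Fin m, x i.castSucc = c i • v i.castSucc := fun i => by
    simp [hxdef]
  have hxl : x (Fin.last m) = v (Fin.last m) := by simp [hxdef]
  have hspan_eq : ∀ i : Fin m, span K {x i.castSucc} = span K {v i.castSucc} := by
    intro i
    rw [hxc i]
    exact span_singleton_smul_eq (isUnit_iff_ne_zero.2 (hcne i)) _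
  refine ⟨x, ?_, ?_, ?_, ?_⟩
  · intro i
    induction i using Fin.lastCases with
    | last => rw [hxl]; exact hv _
    | cast i => rw [hspan_eq i]; exact hv _
  · have := hliX.units_smul (fun i => Units.mk0 (c i) (hcne i))
    convert this using 1
    funext i
    simp [hxc i, hX, Units.smul_def]
  · rw [hxl, ← hc]
    exact Finset.sum_congr rfl fun i _ => (hxc i).symm
  · rw [← htot]
    rw [span_range_eq_iSup, span_range_eq_iSup]
    exact iSup_congr hspan_eq

theorem stmt17 (K V : Type*) [DivisionRing K] [AddCommGroup V] [Module K V]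
    (m : ℕ) (hm : 2 ≤ m) (hdim : (m : Cardinal) ≤ Module.rank K V)
    (P : Fin (m + 1) → Submodule K V) (hinj : Function.Injective P)
    (hone : ∀ i, finrank K ↥(P i) = 1)
    (hind : ∀ s : Finset (Fin (m + 1)), s.card ≤ m → finrank K ↥(s.sup P) = s.card)
    (hdep : finrank K ↥(Finset.univ.sup P) = m) :
    ∀ σ : Equiv.Perm (Fin (m + 1)),
      ∃ u : V ≃ₗ[K] V, ∀ i, (P i).map (u : V →ₗ[K] V) = P (σ i) := by
  classical
  intro σ
  have hm1 : 1 ≤ m := by omega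
  -- the permuted family satisfies the same hypotheses
  have hsupQ : ∀ s : Finset (Fin (m + 1)), s.sup (fun i => P (σ i)) = (s.image σ).sup P := by
    intro s
    rw [Finset.sup_image]
    rfl
  have honeQ : ∀ i, finrank K ↥((fun i => P (σ i)) i) = 1 := fun i => hone _
  have hindQ : ∀ s : Finset (Fin (m + 1)), s.card ≤ m →
      finrank K ↥(s.sup (fun i => P (σ i))) = s.card := by
    intro s hs
    rw [hsupQ]
    have hcard : (s.image σ).card = s.card := Finset.card_image_of_injective _ σ.injective
    rw [← hcard]
    exact hind _ (by rw [hcard]; exact hs)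
  have huniv : (Finset.univ : Finset (Fin (m + 1))).image σ = Finset.univ :=
    Finset.image_univ_of_surjective σ.surjective
  have hdepQ : finrank K ↥(Finset.univ.sup (fun i => P (σ i))) = m := by
    rw [hsupQ, huniv]; exact hdep
  obtain ⟨x, hPx, hliX, hsumX, hspanX⟩ := normalize' hm1 P hone hind hdep
  obtain ⟨y, hPy, hliY, hsumY, hspanY⟩ := normalize' hm1 (fun i => P (σ i)) honeQ hindQ hdepQ
  set W : Submodule K V := Finset.univ.sup P with hW
  have hWQ : Finset.univ.sup (fun i => P (σ i)) = W := by rw [hsupQ, huniv]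
  rw [hWQ] at hspanY
  -- memberships
  have hxW : ∀ i, x i ∈ W := fun i =>
    Finset.le_sup (f := P) (Finset.mem_univ i) ((hPx i).symm ▸ mem_span_singleton_self _)
  have hyW : ∀ i, y i ∈ W := by
    intro i
    have : y i ∈ P (σ i) := (hPy i).symm ▸ mem_span_singleton_self _
    exact Finset.le_sup (f := P) (Finset.mem_univ (σ i)) this
  -- bases of W
  set bX : Basis (Fin m) K ↥W :=
    (Basis.span hliX).map (LinearEquiv.ofEq _ _ hspanX) with hbX
  set bY : Basis (Fin m) K ↥W :=
    (Basis.span hliY).map (LinearEquiv.ofEq _ _ hspanY) with hbY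
  have hbXc : ∀ i : Fin m, (bX i : V) = x i.castSucc := by
    intro i
    simp [hbX, Basis.span_apply]
  have hbYc : ∀ i : Fin m, (bY i : V) = y i.castSucc := by
    intro i
    simp [hbY, Basis.span_apply]
  set e : ↥W ≃ₗ[K] ↥W := bX.equiv bY (Equiv.refl _) with he
  have hkey : ∀ i : Fin (m + 1), ((e ⟨x i, hxW i⟩ : ↥W) : V) = y i := by
    intro i
    induction i using Fin.lastCases with
    | last =>
      have hx' : (⟨x (Fin.last m), hxW _⟩ : ↥W) = ∑ j : Fin m, bX j := by
        apply Subtype.ext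
        push_cast
        rw [hsumX]
        exact Finset.sum_congr rfl fun j _ => (hbXc j).symm
      rw [hx', map_sum]
      have : ∀ j : Fin m, e (bX j) = bY j := fun j => by
        simp [he, Basis.equiv_apply]
      push_cast
      rw [Finset.sum_congr rfl fun j _ => congrArg _ (this j), hsumY]
      exact Finset.sum_congr rfl fun j _ => hbYc j
    | cast i =>
      have hx' : (⟨x i.castSucc, hxW _⟩ : ↥W) = bX i := Subtype.ext (hbXc i).symm
      rw [hx']
      have : e (bX i) = bY i := by simp [he, Basis.equiv_apply]
      rw [this]
      exact hbYc i
  -- extend e by the identity on a complement of W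
  obtain ⟨C, hC⟩ := Submodule.exists_isCompl W
  set u : V ≃ₗ[K] V :=
    (Submodule.prodEquivOfIsCompl W C hC).symm.trans
      ((e.prodCongr (LinearEquiv.refl K ↥C)).trans (Submodule.prodEquivOfIsCompl W C hC)) with hu
  have hprod : ∀ (w : ↥W) (c : ↥C),
      Submodule.prodEquivOfIsCompl W C hC (w, c) = (w : V) + (c : V) := by
    intro w c
    have := Submodule.coe_prodEquivOfIsCompl W C hC
    calc Submodule.prodEquivOfIsCompl W C hC (w, c)
        = ((Submodule.prodEquivOfIsCompl W C hC : ↥W × ↥C →ₗ[K] V)) (w, c) := rfl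
      _ = (W.subtype.coprod C.subtype) (w, c) := by rw [this]
      _ = (w : V) + (c : V) := rfl
  have huw : ∀ w : ↥W, u (w : V) = ((e w : ↥W) : V) := by
    intro w
    have hsymm : (Submodule.prodEquivOfIsCompl W C hC).symm (w : V) = (w, 0) := by
      rw [LinearEquiv.symm_apply_eq, hprod]
      simp
    rw [hu]
    simp only [LinearEquiv.trans_apply, hsymm]
    have : (e.prodCongr (LinearEquiv.refl K ↥C)) (w, 0) = (e w, 0) := by
      simp [LinearEquiv.prodCongr_apply]
    rw [this, hprod]
    simp
  refine ⟨u, fun i => ?_⟩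
  rw [hPx i, Submodule.map_span, Set.image_singleton]
  have hux : (u : V →ₗ[K] V) (x i) = y i := by
    have := huw ⟨x i, hxW i⟩
    simpa [hkey i] using this
  rw [hux]
  exact (hPy i).symm
end
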